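/- Let n ≥ 1, ε > 0, let H : ℝⁿ × ℝⁿ → ℝ be continuously differentiable, and let u : ℝⁿ → ℝ be three times continuously differentiable and satisfy u(x) + H(x, ∇u(x)) = ε Δu(x) for every x ∈ ℝⁿ. Then the function w(x) := |∇u(x)|²/2 satisfies, at every x ∈ ℝⁿ, the identity 2 w(x) + D_pH(x, ∇u(x)) · ∇w(x) + D_xH(x, ∇u(x)) · ∇u(x) = ε Δw(x) − ε |D²u(x)|². -/

import Mathlib

open scoped RealInnerProductSpace

/-- The second partial derivative ∂²u/∂xᵢ∂xₖ of `u` at `x`. -/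
noncomputable def pd2 {n : ℕ} (u : EuclideanSpace ℝ (Fin n) → ℝ)
    (x : EuclideanSpace ℝ (Fin n)) (i k : Fin n) : ℝ :=
  fderiv ℝ (fun y => fderiv ℝ u y (EuclideanSpace.single k 1)) x (EuclideanSpace.single i 1)

/-- The Laplacian of `u` at `x`: the sum of the second partial derivatives ∂²u/∂xᵢ². -/
noncomputable def lap {n : ℕ} (u : EuclideanSpace ℝ (Fin n) → ℝ)
    (x : EuclideanSpace ℝ (Fin n)) : ℝ :=
  ∑ i, pd2 u x i i

/-- |D²u(x)|² : the sum over all i, k of (∂²u/∂xᵢ∂xₖ)². -/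
noncomputable def hessSq {n : ℕ} (u : EuclideanSpace ℝ (Fin n) → ℝ)
    (x : EuclideanSpace ℝ (Fin n)) : ℝ :=
  ∑ i, ∑ k, (pd2 u x i k) ^ 2

section Aux

variable {n : ℕ}

lemma grad_apply (f : EuclideanSpace ℝ (Fin n) → ℝ) (x : EuclideanSpace ℝ (Fin n)) (k : Fin n) :
    gradient f x k = fderiv ℝ f x (EuclideanSpace.single k 1) := by
  have h : ⟪gradient f x, EuclideanSpace.single k (1:ℝ)⟫
      = fderiv ℝ f x (EuclideanSpace.single k 1) := by
    rw [gradient]; exact InnerProductSpace.toDual_symm_apply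
  rw [EuclideanSpace.inner_single_right] at h
  simpa using h

lemma inner_eq (a b : EuclideanSpace ℝ (Fin n)) : ⟪a, b⟫ = ∑ i, a i * b i := by
  simp [PiLp.inner_apply, RCLike.inner_apply, mul_comm]

lemma norm_sq_eq (a : EuclideanSpace ℝ (Fin n)) : ‖a‖ ^ 2 = ∑ i, (a i) ^ 2 := by
  rw [← real_inner_self_eq_norm_sq, inner_eq]
  simp [sq]

lemma eucl_decomp (v : EuclideanSpace ℝ (Fin n)) :
    v = ∑ i, v i • EuclideanSpace.single i (1:ℝ) := by
  ext j
  have h : (∑ i, v i • EuclideanSpace.single i (1:ℝ)) j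
      = ∑ i, (v i • EuclideanSpace.single i (1:ℝ)) j := by
    rw [WithLp.ofLp_sum]; exact Finset.sum_apply j _ _
  rw [h]
  simp [EuclideanSpace.single_apply]

lemma contDiff_pd {m : ℕ} (u : EuclideanSpace ℝ (Fin n) → ℝ) (hu : ContDiff ℝ (m+1) u)
    (v : EuclideanSpace ℝ (Fin n)) : ContDiff ℝ m (fun y => fderiv ℝ u y v) := by
  have h : ContDiff ℝ m (fderiv ℝ u) := hu.fderiv_right (by norm_cast)
  exact h.clm_apply contDiff_const

lemma pd2_eq (f : EuclideanSpace ℝ (Fin n) → ℝ) (hf : ContDiff ℝ 2 f)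
    (x : EuclideanSpace ℝ (Fin n)) (i k : Fin n) :
    pd2 f x i k
      = fderiv ℝ (fderiv ℝ f) x (EuclideanSpace.single i 1) (EuclideanSpace.single k 1) := by
  have hd : DifferentiableAt ℝ (fderiv ℝ f) x :=
    ((hf.fderiv_right (by norm_cast : (1:WithTop ℕ∞) + 1 ≤ 2)).differentiable
      one_ne_zero).differentiableAt
  rw [pd2, fderiv_clm_apply hd (differentiableAt_const _)]
  simp

lemma pd2_symm (f : EuclideanSpace ℝ (Fin n) → ℝ) (hf : ContDiff ℝ 2 f)
    (x : EuclideanSpace ℝ (Fin n)) (i k : Fin n) :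
    pd2 f x i k = pd2 f x k i := by
  rw [pd2_eq f hf, pd2_eq f hf]
  exact hf.contDiffAt.isSymmSndFDerivAt (by simp) _ _

lemma contDiff_grad {m : ℕ} (u : EuclideanSpace ℝ (Fin n) → ℝ) (hu : ContDiff ℝ (m+1) u) :
    ContDiff ℝ m (gradient u) := by
  have h : gradient u = fun y =>
      (InnerProductSpace.toDual ℝ (EuclideanSpace ℝ (Fin n))).symm (fderiv ℝ u y) := rfl
  rw [h]
  exact (InnerProductSpace.toDual ℝ _).symm.contDiff.comp (hu.fderiv_right (by norm_cast))

lemma fderiv_grad_apply (u : EuclideanSpace ℝ (Fin n) → ℝ) (hu : ContDiff ℝ 3 u)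
    (x v : EuclideanSpace ℝ (Fin n)) (k : Fin n) :
    fderiv ℝ (gradient u) x v k
      = fderiv ℝ (fun y => fderiv ℝ u y (EuclideanSpace.single k 1)) x v := by
  have hg : DifferentiableAt ℝ (gradient u) x :=
    ((contDiff_grad (m := 2) u hu).differentiable (by norm_cast)).differentiableAt
  have h2 : HasFDerivAt (fun y => gradient u y k)
      ((EuclideanSpace.proj k).comp (fderiv ℝ (gradient u) x)) x :=
    (EuclideanSpace.proj (𝕜 := ℝ) k).hasFDerivAt.comp x hg.hasFDerivAt
  have h3 : (fun y => gradient u y k)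
      = fun y => fderiv ℝ u y (EuclideanSpace.single k 1) :=
    funext fun y => grad_apply u y k
  rw [h3] at h2
  rw [h2.fderiv]
  simp

end Aux

theorem stmt0 (n : ℕ) (hn : 1 ≤ n) (ε : ℝ) (hε : 0 < ε)
    (H : EuclideanSpace ℝ (Fin n) × EuclideanSpace ℝ (Fin n) → ℝ) (hH : ContDiff ℝ 1 H)
    (u : EuclideanSpace ℝ (Fin n) → ℝ) (hu : ContDiff ℝ 3 u)
    (heq : ∀ x, u x + H (x, gradient u x) = ε * lap u x) :
    ∀ x, 2 * (‖gradient u x‖ ^ 2 / 2)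
        + ⟪gradient (fun q => H (x, q)) (gradient u x),
            gradient (fun y => ‖gradient u y‖ ^ 2 / 2) x⟫
        + ⟪gradient (fun y => H (y, gradient u x)) x, gradient u x⟫
      = ε * lap (fun y => ‖gradient u y‖ ^ 2 / 2) x - ε * hessSq u x := by
  intro x
  classical
  set p : Fin n → EuclideanSpace ℝ (Fin n) → ℝ :=
    fun k y => fderiv ℝ u y (EuclideanSpace.single k 1) with hp_def
  have hu2 : ContDiff ℝ 2 u := hu.of_le (by norm_cast)
  have hp : ∀ k, ContDiff ℝ 2 (p k) := fun k => contDiff_pd (m := 2) u hu _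
  have hpdiff : ∀ k, Differentiable ℝ (p k) := fun k => (hp k).differentiable (by norm_cast)
  have hq : ∀ (v : EuclideanSpace ℝ (Fin n)) k,
      Differentiable ℝ (fun y => fderiv ℝ (p k) y v) := fun v k =>
    (contDiff_pd (m := 1) (p k) (hp k) v).differentiable one_ne_zero
  have hgp : ∀ (y : EuclideanSpace ℝ (Fin n)) k, gradient u y k = p k y :=
    fun y k => grad_apply u y k
  -- pd2 of u in terms of p (definitional)
  have hpd2 : ∀ (x' : EuclideanSpace ℝ (Fin n)) i k,
      pd2 u x' i k = fderiv ℝ (p k) x' (EuclideanSpace.single i 1) := fun _ _ _ => rfl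
  have hsu : ∀ (y : EuclideanSpace ℝ (Fin n)) i k, pd2 u y i k = pd2 u y k i :=
    fun y i k => pd2_symm u hu2 y i k
  -- the function w, rewritten as a sum of squares of the partials
  have hWfun : (fun y => ‖gradient u y‖ ^ 2 / 2)
      = fun y => ∑ k, (p k y) ^ 2 / 2 := by
    funext y
    rw [norm_sq_eq, Finset.sum_div]
    exact Finset.sum_congr rfl fun k _ => by rw [hgp y k]
  rw [hWfun]
  set W : EuclideanSpace ℝ (Fin n) → ℝ := fun y => ∑ k, (p k y) ^ 2 / 2 with hW_def
  -- derivative of W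
  have hWd : ∀ y, HasFDerivAt W (∑ k, p k y • fderiv ℝ (p k) y) y := by
    intro y
    apply HasFDerivAt.fun_sum
    intro k _
    have hk : HasFDerivAt (p k) (fderiv ℝ (p k) y) y := (hpdiff k y).hasFDerivAt
    have h3 : HasFDerivAt (fun z => (1/2 : ℝ) * (p k z * p k z))
        ((1/2 : ℝ) • (p k y • fderiv ℝ (p k) y + p k y • fderiv ℝ (p k) y)) y :=
      (hk.mul hk).const_mul (1/2)
    have h4 : (fun z => (1/2 : ℝ) * (p k z * p k z)) = fun z => (p k z) ^ 2 / 2 := by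
      funext z; ring
    rw [h4] at h3
    refine h3.congr_fderiv ?_
    ext v
    simp
    ring
  have hpdW : ∀ (y : EuclideanSpace ℝ (Fin n)) i, fderiv ℝ W y (EuclideanSpace.single i 1)
      = ∑ k, p k y * fderiv ℝ (p k) y (EuclideanSpace.single i 1) := by
    intro y i
    rw [(hWd y).fderiv]
    simp
  -- second derivatives of W
  have hpd2W : ∀ i, pd2 W x i i
      = ∑ k, ((fderiv ℝ (p k) x (EuclideanSpace.single i 1)) ^ 2
          + p k x * pd2 (p k) x i i) := by
    intro i
    have hfun : (fun y => fderiv ℝ W y (EuclideanSpace.single i 1))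
        = fun y => ∑ k, p k y * fderiv ℝ (p k) y (EuclideanSpace.single i 1) :=
      funext fun y => hpdW y i
    have hstep : pd2 W x i i
        = fderiv ℝ (fun y => ∑ k, p k y * fderiv ℝ (p k) y (EuclideanSpace.single i 1)) x
            (EuclideanSpace.single i 1) := by
      rw [pd2, hfun]
    rw [hstep]
    have hsum : HasFDerivAt
        (fun y => ∑ k, p k y * fderiv ℝ (p k) y (EuclideanSpace.single i 1))
        (∑ k, (p k x • fderiv ℝ (fun y => fderiv ℝ (p k) y (EuclideanSpace.single i 1)) x
            + fderiv ℝ (p k) x (EuclideanSpace.single i 1) • fderiv ℝ (p k) x)) x := by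
      apply HasFDerivAt.fun_sum
      intro k _
      exact (hpdiff k x).hasFDerivAt.mul ((hq _ k x).hasFDerivAt)
    rw [hsum.fderiv]
    simp only [ContinuousLinearMap.sum_apply, ContinuousLinearMap.add_apply,
      ContinuousLinearMap.smul_apply, smul_eq_mul]
    refine Finset.sum_congr rfl fun k _ => ?_
    rw [pd2]
    ring
  -- differentiate the PDE
  have hgd : DifferentiableAt ℝ (gradient u) x :=
    ((contDiff_grad (m := 2) u hu).differentiable (by norm_cast)).differentiableAt
  have hHd : DifferentiableAt ℝ H (x, gradient u x) :=
    (hH.differentiable one_ne_zero).differentiableAt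
  have hlapd : HasFDerivAt (lap u)
      (∑ k, fderiv ℝ (fun y => fderiv ℝ (p k) y (EuclideanSpace.single k 1)) x) x := by
    have hfun : lap u = fun y => ∑ k, fderiv ℝ (p k) y (EuclideanSpace.single k 1) := rfl
    rw [hfun]
    exact HasFDerivAt.fun_sum fun k _ => (hq _ k x).hasFDerivAt
  have hLHS : HasFDerivAt (fun y => u y + H (y, gradient u y))
      (fderiv ℝ u x + (fderiv ℝ H (x, gradient u x)).comp
        ((ContinuousLinearMap.id ℝ _).prod (fderiv ℝ (gradient u) x))) x := by
    have h1 : HasFDerivAt u (fderiv ℝ u x) x :=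
      ((hu.differentiable (by norm_cast)) x).hasFDerivAt
    have h3 : HasFDerivAt (fun y => (y, gradient u y))
        ((ContinuousLinearMap.id ℝ _).prod (fderiv ℝ (gradient u) x)) x :=
      HasFDerivAt.prodMk (hasFDerivAt_id x) hgd.hasFDerivAt
    exact h1.add (hHd.hasFDerivAt.comp x h3)
  have hfeq : (fun y => u y + H (y, gradient u y)) = fun y => ε * lap u y := funext heq
  have hRHS : HasFDerivAt (fun y => ε * lap u y)
      (ε • ∑ k, fderiv ℝ (fun y => fderiv ℝ (p k) y (EuclideanSpace.single k 1)) x) x :=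
    hlapd.const_mul ε
  rw [hfeq] at hLHS
  have hder := hLHS.unique hRHS
  have hPDE0 : ∀ i, p i x + fderiv ℝ H (x, gradient u x)
      (EuclideanSpace.single i 1, fderiv ℝ (gradient u) x (EuclideanSpace.single i 1))
      = ε * ∑ k, pd2 (p k) x i k := by
    intro i
    have h := congrArg (fun L : _ →L[ℝ] ℝ => L (EuclideanSpace.single i 1)) hder
    simp only [ContinuousLinearMap.add_apply, ContinuousLinearMap.coe_comp',
      Function.comp_apply, ContinuousLinearMap.prod_apply, ContinuousLinearMap.coe_id',
      id_eq, ContinuousLinearMap.smul_apply, ContinuousLinearMap.sum_apply,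
      smul_eq_mul] at h
    convert h using 2
    rfl
  -- decompose the derivative of the gradient in coordinates
  have hb : ∀ i, fderiv ℝ (gradient u) x (EuclideanSpace.single i 1)
      = ∑ k, pd2 u x i k • EuclideanSpace.single k (1:ℝ) := by
    intro i
    ext j
    have h1 : fderiv ℝ (gradient u) x (EuclideanSpace.single i 1) j
        = pd2 u x i j := fderiv_grad_apply u hu x _ j
    rw [h1]
    have h2 : (∑ k, pd2 u x i k • EuclideanSpace.single k (1:ℝ)) j
        = ∑ k, (pd2 u x i k • EuclideanSpace.single k (1:ℝ)) j := by
      rw [WithLp.ofLp_sum]; exact Finset.sum_apply j _ _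
    rw [h2]
    simp [EuclideanSpace.single_apply]
  have hsplit : ∀ i, fderiv ℝ H (x, gradient u x)
      (EuclideanSpace.single i 1, fderiv ℝ (gradient u) x (EuclideanSpace.single i 1))
      = fderiv ℝ H (x, gradient u x) (EuclideanSpace.single i 1, 0)
        + ∑ k, pd2 u x i k * fderiv ℝ H (x, gradient u x) (0, EuclideanSpace.single k 1) := by
    intro i
    have h1 : ((EuclideanSpace.single i (1:ℝ),
        fderiv ℝ (gradient u) x (EuclideanSpace.single i 1)) :
        EuclideanSpace ℝ (Fin n) × EuclideanSpace ℝ (Fin n))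
        = (EuclideanSpace.single i (1:ℝ), (0 : EuclideanSpace ℝ (Fin n)))
          + ∑ k, pd2 u x i k •
            (((0 : EuclideanSpace ℝ (Fin n)), EuclideanSpace.single k (1:ℝ))) := by
      rw [Prod.ext_iff]
      constructor
      · simp [Prod.fst_sum]
      · simp [hb i, Prod.snd_sum]
    rw [h1, map_add, map_sum]
    congr 1
    exact Finset.sum_congr rfl fun k _ => by rw [map_smul]; simp
  -- the gradients of the partial functions of H
  have hA : ∀ i, gradient (fun y => H (y, gradient u x)) x i
      = fderiv ℝ H (x, gradient u x) (EuclideanSpace.single i 1, 0) := by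
    intro i
    rw [grad_apply]
    have hc : HasFDerivAt (fun y => H (y, gradient u x))
        ((fderiv ℝ H (x, gradient u x)).comp
          (ContinuousLinearMap.inl ℝ (EuclideanSpace ℝ (Fin n)) (EuclideanSpace ℝ (Fin n)))) x :=
      hHd.hasFDerivAt.comp x (hasFDerivAt_prodMk_left x (gradient u x))
    rw [hc.fderiv]
    rfl
  have hB : ∀ k, gradient (fun q => H (x, q)) (gradient u x) k
      = fderiv ℝ H (x, gradient u x) (0, EuclideanSpace.single k 1) := by
    intro k
    rw [grad_apply]
    have hc : HasFDerivAt (fun q => H (x, q))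
        ((fderiv ℝ H (x, gradient u x)).comp
          (ContinuousLinearMap.inr ℝ (EuclideanSpace ℝ (Fin n)) (EuclideanSpace ℝ (Fin n))))
        (gradient u x) :=
      hHd.hasFDerivAt.comp (gradient u x) (hasFDerivAt_prodMk_right x (gradient u x))
    rw [hc.fderiv]
    rfl
  -- symmetry of the third derivatives
  have h3sym : ∀ i k, pd2 (p k) x i k = pd2 (p i) x k k := by
    intro i k
    rw [pd2_symm (p k) (hp k)]
    show fderiv ℝ (fun y => fderiv ℝ (p k) y (EuclideanSpace.single i 1)) x
        (EuclideanSpace.single k 1)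
      = fderiv ℝ (fun y => fderiv ℝ (p i) y (EuclideanSpace.single k 1)) x
        (EuclideanSpace.single k 1)
    have hfe : (fun y => fderiv ℝ (p k) y (EuclideanSpace.single i 1))
        = fun y => fderiv ℝ (p i) y (EuclideanSpace.single k 1) :=
      funext fun y => hsu y i k
    rw [hfe]
  -- the differentiated PDE, in final form
  have hPDE : ∀ i, p i x + (fderiv ℝ H (x, gradient u x) (EuclideanSpace.single i 1, 0)
      + ∑ k, fderiv ℝ (p k) x (EuclideanSpace.single i 1)
          * fderiv ℝ H (x, gradient u x) (0, EuclideanSpace.single k 1))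
      = ε * ∑ k, pd2 (p i) x k k := by
    intro i
    have h := hPDE0 i
    rw [hsplit i] at h
    rw [Finset.sum_congr rfl fun k _ => h3sym i k] at h
    exact h
  have hfin : ∑ i, p i x * (p i x + (fderiv ℝ H (x, gradient u x) (EuclideanSpace.single i 1, 0)
      + ∑ k, fderiv ℝ (p k) x (EuclideanSpace.single i 1)
          * fderiv ℝ H (x, gradient u x) (0, EuclideanSpace.single k 1)))
      = ε * ∑ i, p i x * ∑ k, pd2 (p i) x k k := by
    rw [Finset.mul_sum]
    exact Finset.sum_congr rfl fun i _ => by rw [hPDE i]; ring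
  -- the three terms on the left of the goal
  have hL0 : 2 * (‖gradient u x‖ ^ 2 / 2) = ∑ i, p i x ^ 2 := by
    have hS : ∑ i, (gradient u x i) ^ 2 = ∑ i, p i x ^ 2 :=
      Finset.sum_congr rfl fun i _ => by rw [hgp x i]
    rw [norm_sq_eq, hS]
    ring
  have hL1 : ⟪gradient (fun q => H (x, q)) (gradient u x), gradient W x⟫
      = ∑ k, fderiv ℝ H (x, gradient u x) (0, EuclideanSpace.single k 1)
          * ∑ j, p j x * fderiv ℝ (p j) x (EuclideanSpace.single k 1) := by
    rw [inner_eq]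
    refine Finset.sum_congr rfl fun k _ => ?_
    rw [hB k, grad_apply W x k, hpdW x k]
  have hL2 : ⟪gradient (fun y => H (y, gradient u x)) x, gradient u x⟫
      = ∑ i, fderiv ℝ H (x, gradient u x) (EuclideanSpace.single i 1, 0) * p i x := by
    rw [inner_eq]
    refine Finset.sum_congr rfl fun i _ => ?_
    rw [hA i, hgp x i]
  -- rearranging the middle term
  have hswap : ∑ k, fderiv ℝ H (x, gradient u x) (0, EuclideanSpace.single k 1)
          * ∑ j, p j x * fderiv ℝ (p j) x (EuclideanSpace.single k 1)
      = ∑ i, p i x * ∑ k, fderiv ℝ (p k) x (EuclideanSpace.single i 1)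
          * fderiv ℝ H (x, gradient u x) (0, EuclideanSpace.single k 1) := by
    calc ∑ k, fderiv ℝ H (x, gradient u x) (0, EuclideanSpace.single k 1)
            * ∑ j, p j x * fderiv ℝ (p j) x (EuclideanSpace.single k 1)
        = ∑ k, ∑ j, fderiv ℝ H (x, gradient u x) (0, EuclideanSpace.single k 1)
            * (p j x * fderiv ℝ (p j) x (EuclideanSpace.single k 1)) :=
          Finset.sum_congr rfl fun k _ => Finset.mul_sum _ _ _
      _ = ∑ j, ∑ k, fderiv ℝ H (x, gradient u x) (0, EuclideanSpace.single k 1)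
            * (p j x * fderiv ℝ (p j) x (EuclideanSpace.single k 1)) := Finset.sum_comm
      _ = ∑ i, p i x * ∑ k, fderiv ℝ (p k) x (EuclideanSpace.single i 1)
            * fderiv ℝ H (x, gradient u x) (0, EuclideanSpace.single k 1) := by
          refine Finset.sum_congr rfl fun j _ => ?_
          rw [Finset.mul_sum]
          refine Finset.sum_congr rfl fun k _ => ?_
          rw [show fderiv ℝ (p j) x (EuclideanSpace.single k 1)
              = fderiv ℝ (p k) x (EuclideanSpace.single j 1) from hsu x k j]
          ring
  -- the right-hand side
  have hlapW : lap W x = (∑ i, ∑ k, fderiv ℝ (p k) x (EuclideanSpace.single i 1) ^ 2)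
      + ∑ i, p i x * ∑ k, pd2 (p i) x k k := by
    rw [lap]
    rw [Finset.sum_congr rfl fun i _ => hpd2W i]
    calc ∑ i, ∑ k, (fderiv ℝ (p k) x (EuclideanSpace.single i 1) ^ 2
            + p k x * pd2 (p k) x i i)
        = ∑ i, ((∑ k, fderiv ℝ (p k) x (EuclideanSpace.single i 1) ^ 2)
            + ∑ k, p k x * pd2 (p k) x i i) :=
          Finset.sum_congr rfl fun i _ => Finset.sum_add_distrib
      _ = (∑ i, ∑ k, fderiv ℝ (p k) x (EuclideanSpace.single i 1) ^ 2)
            + ∑ i, ∑ k, p k x * pd2 (p k) x i i := Finset.sum_add_distrib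
      _ = (∑ i, ∑ k, fderiv ℝ (p k) x (EuclideanSpace.single i 1) ^ 2)
            + ∑ i, p i x * ∑ k, pd2 (p i) x k k := by
          congr 1
          rw [Finset.sum_comm]
          exact Finset.sum_congr rfl fun k _ => (Finset.mul_sum _ _ _).symm
  have hhess : hessSq u x = ∑ i, ∑ k, fderiv ℝ (p k) x (EuclideanSpace.single i 1) ^ 2 := rfl
  have hfinal : ∑ i, p i x * (p i x
        + (fderiv ℝ H (x, gradient u x) (EuclideanSpace.single i 1, 0)
          + ∑ k, fderiv ℝ (p k) x (EuclideanSpace.single i 1)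
              * fderiv ℝ H (x, gradient u x) (0, EuclideanSpace.single k 1)))
      = ∑ i, p i x ^ 2 + (∑ i, p i x * ∑ k, fderiv ℝ (p k) x (EuclideanSpace.single i 1)
          * fderiv ℝ H (x, gradient u x) (0, EuclideanSpace.single k 1)
        + ∑ i, fderiv ℝ H (x, gradient u x) (EuclideanSpace.single i 1, 0) * p i x) := by
    rw [← Finset.sum_add_distrib, ← Finset.sum_add_distrib]
    exact Finset.sum_congr rfl fun i _ => by ring
  rw [hL0, hL1, hL2, hswap, hlapW, hhess]
  rw [add_assoc, ← hfinal, hfin]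
  ring
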